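/- arXiv:1009.4419 — 4 statements merged into one kernel-verified Lean document; each statement's English description precedes it below -/
import Mathlib

section
/- The 2-periodic sequence of free R-modules ⋯ → R² → R² → R² → J → 0 is exact, i.e. it is a free resolution of the ideal J as an R-module. Here the rightmost map ε: R² → J sends (a,b) ↦ ax + by, and the maps R² → R² alternate between d₁(a,b) = (wa − yb, −za + xb) and d₂(a,b) = (xa + yb, za + wb) (so the resolution is ⋯ → R² —d₂→ R² —d₁→ R² —ε→ J → 0, continuing 2-periodically to the left). -/
open MvPolynomial

noncomputable section

abbrev Pring : Type := MvPolynomial (Fin 4) ℂ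

/-- `R = ℂ[x,y,z,w]/(xw - yz)`, with variables `x = X 0`, `y = X 1`, `z = X 2`, `w = X 3`. -/
abbrev Rring : Type := Pring ⧸ Ideal.span {(X 0 * X 3 - X 1 * X 2 : Pring)}

def xR : Rring := Ideal.Quotient.mk _ (X 0)
def yR : Rring := Ideal.Quotient.mk _ (X 1)
def zR : Rring := Ideal.Quotient.mk _ (X 2)
def wR : Rring := Ideal.Quotient.mk _ (X 3)

/-- The ideal `J = (x, y) ⊆ R` of the plane `X = {x = y = 0} ⊂ Y`. -/
def Jid : Ideal Rring := Ideal.span {xR, yR}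

namespace Stmt0Aux

abbrev mkQ : Pring →+* Rring := Ideal.Quotient.mk (Ideal.span {(X 0 * X 3 - X 1 * X 2 : Pring)})

lemma xR_def : xR = mkQ (X 0) := rfl
lemma yR_def : yR = mkQ (X 1) := rfl
lemma zR_def : zR = mkQ (X 2) := rfl
lemma wR_def : wR = mkQ (X 3) := rfl

lemma qpoly_ne_zero : (X 0 * X 3 - X 1 * X 2 : Pring) ≠ 0 := by
  intro h
  have h2 := congrArg (aeval (![1,0,0,1] : Fin 4 → ℂ)) h
  simp at h2

lemma x_not_dvd_y : ¬ (X 0 : Pring) ∣ X 1 := by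
  intro h
  have h2 := map_dvd (aeval (![0,1,0,0] : Fin 4 → ℂ)) h
  simp at h2

lemma x0_dvd {p : Pring} (h : (X 0 : Pring) ∣ p * X 1) : (X 0 : Pring) ∣ p := by
  have h2 := map_dvd (MvPolynomial.finSuccEquiv ℂ 3) h
  rw [map_mul, finSuccEquiv_X_zero,
    show (X 1 : Pring) = X (Fin.succ 0) from rfl, finSuccEquiv_X_succ] at h2
  rcases Polynomial.prime_X.dvd_or_dvd h2 with h3 | h3
  · have h4 := map_dvd (MvPolynomial.finSuccEquiv ℂ 3).symm h3
    rw [AlgEquiv.symm_apply_apply] at h4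
    have h5 : (MvPolynomial.finSuccEquiv ℂ 3).symm Polynomial.X = (X 0 : Pring) := by
      rw [← finSuccEquiv_X_zero (R := ℂ) (n := 3), AlgEquiv.symm_apply_apply]
    rwa [h5] at h4
  · exfalso
    rw [Polynomial.X_dvd_iff, Polynomial.coeff_C] at h3
    simp only [if_pos rfl] at h3
    exact MvPolynomial.X_ne_zero _ h3

lemma mk_eq_zero_iff (p : Pring) :
    mkQ p = 0 ↔ ∃ c : Pring, c * (X 0 * X 3 - X 1 * X 2) = p := by
  rw [Ideal.Quotient.eq_zero_iff_mem, Ideal.mem_span_singleton']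

lemma xw_eq : xR * wR = yR * zR := by
  have : mkQ (X 0 * X 3 - X 1 * X 2) = 0 := (mk_eq_zero_iff _).mpr ⟨1, one_mul _⟩
  rw [map_sub, map_mul, map_mul, sub_eq_zero] at this
  simpa [xR_def, yR_def, zR_def, wR_def] using this

end Stmt0Aux

set_option maxHeartbeats 1600000 in
open Stmt0Aux in
theorem stmt_0 (ε : Rring × Rring →ₗ[Rring] Rring)
    (d1 d2 : Rring × Rring →ₗ[Rring] Rring × Rring)
    (hε : ∀ a b : Rring, ε (a, b) = a * xR + b * yR)
    (hd1 : ∀ a b : Rring, d1 (a, b) = (wR * a - yR * b, -(zR * a) + xR * b))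
    (hd2 : ∀ a b : Rring, d2 (a, b) = (xR * a + yR * b, zR * a + wR * b)) :
    LinearMap.range ε = Jid ∧
    LinearMap.ker ε = LinearMap.range d1 ∧
    LinearMap.ker d1 = LinearMap.range d2 ∧
    LinearMap.ker d2 = LinearMap.range d1 := by
  have hxw := xw_eq
  refine ⟨?_, ?_, ?_, ?_⟩
  · -- range ε = Jid
    apply le_antisymm
    · rintro r ⟨⟨a, b⟩, rfl⟩
      rw [hε]
      exact Ideal.mem_span_pair.mpr ⟨a, b, rfl⟩
    · intro r hr
      obtain ⟨u, v, huv⟩ := Ideal.mem_span_pair.mp hr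
      exact ⟨(u, v), by rw [hε]; exact huv⟩
  · -- ker ε = range d1
    apply le_antisymm
    · rintro ⟨a, b⟩ hab
      rw [LinearMap.mem_ker, hε] at hab
      obtain ⟨A, rfl⟩ := Ideal.Quotient.mk_surjective a
      obtain ⟨B, rfl⟩ := Ideal.Quotient.mk_surjective b
      have h0 : mkQ (A * X 0 + B * X 1) = 0 := by
        rw [map_add, map_mul, map_mul, ← xR_def, ← yR_def]; exact hab
      obtain ⟨C, hC⟩ := (mk_eq_zero_iff _).mp h0
      -- (A - C * X 3) * X 0 = -((B + C * X 2) * X 1)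
      have hdvd : (X 0 : Pring) ∣ (B + C * X 2) * X 1 := by
        refine ⟨-(A - C * X 3), ?_⟩
        linear_combination -hC
      obtain ⟨D, hD⟩ := x0_dvd hdvd
      -- A = C * X 3 - D * X 1
      have hA : A = C * X 3 - D * X 1 := by
        have hx0 : (X 0 : Pring) ≠ 0 := MvPolynomial.X_ne_zero 0
        have h0 : (A - (C * X 3 - D * X 1)) * X 0 = 0 := by
          linear_combination -hC - X 1 * hD
        rcases mul_eq_zero.mp h0 with h | h
        · exact sub_eq_zero.mp h
        · exact absurd h hx0
      have hB : B = -(C * X 2) + D * X 0 := by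
        linear_combination hD
      refine ⟨(mkQ C, mkQ D), ?_⟩
      rw [hd1]
      refine Prod.ext ?_ ?_
      · show wR * mkQ C - yR * mkQ D = mkQ A
        rw [hA, wR_def, yR_def, map_sub, map_mul, map_mul]
        ring
      · show -(zR * mkQ C) + xR * mkQ D = mkQ B
        rw [hB, zR_def, xR_def, map_add, map_neg, map_mul, map_mul]
        ring
    · rintro p ⟨⟨c, d⟩, rfl⟩
      rw [LinearMap.mem_ker, hd1, hε]
      linear_combination c * hxw
  · -- ker d1 = range d2
    apply le_antisymm
    · rintro ⟨a, b⟩ hab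
      rw [LinearMap.mem_ker, hd1] at hab
      obtain ⟨A, rfl⟩ := Ideal.Quotient.mk_surjective a
      obtain ⟨B, rfl⟩ := Ideal.Quotient.mk_surjective b
      have h1 : mkQ (X 3 * A - X 1 * B) = 0 := by
        rw [map_sub, map_mul, map_mul, ← wR_def, ← yR_def]
        exact congrArg Prod.fst hab
      have h2 : mkQ (-(X 2 * A) + X 0 * B) = 0 := by
        rw [map_add, map_neg, map_mul, map_mul, ← zR_def, ← xR_def]
        exact congrArg Prod.snd hab
      obtain ⟨C, hC⟩ := (mk_eq_zero_iff _).mp h1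
      obtain ⟨D, hD⟩ := (mk_eq_zero_iff _).mp h2
      have hq := qpoly_ne_zero
      have hA : A = X 0 * C + X 1 * D := by
        apply mul_right_cancel₀ hq
        linear_combination -(X 0 * hC) - X 1 * hD
      have hB : B = X 2 * C + X 3 * D := by
        apply mul_right_cancel₀ hq
        linear_combination -(X 2 * hC) - X 3 * hD
      refine ⟨(mkQ C, mkQ D), ?_⟩
      rw [hd2]
      refine Prod.ext ?_ ?_
      · show xR * mkQ C + yR * mkQ D = mkQ A
        rw [hA, xR_def, yR_def, map_add, map_mul, map_mul]
      · show zR * mkQ C + wR * mkQ D = mkQ B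
        rw [hB, zR_def, wR_def, map_add, map_mul, map_mul]
    · rintro p ⟨⟨c, d⟩, rfl⟩
      rw [LinearMap.mem_ker, hd2, hd1]
      refine Prod.ext ?_ ?_
      · show wR * (xR * c + yR * d) - yR * (zR * c + wR * d) = 0
        linear_combination c * hxw
      · show -(zR * (xR * c + yR * d)) + xR * (zR * c + wR * d) = 0
        linear_combination d * hxw
  · -- ker d2 = range d1
    apply le_antisymm
    · rintro ⟨a, b⟩ hab
      rw [LinearMap.mem_ker, hd2] at hab
      obtain ⟨A, rfl⟩ := Ideal.Quotient.mk_surjective a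
      obtain ⟨B, rfl⟩ := Ideal.Quotient.mk_surjective b
      have h1 : mkQ (X 0 * A + X 1 * B) = 0 := by
        rw [map_add, map_mul, map_mul, ← xR_def, ← yR_def]
        exact congrArg Prod.fst hab
      have h2 : mkQ (X 2 * A + X 3 * B) = 0 := by
        rw [map_add, map_mul, map_mul, ← zR_def, ← wR_def]
        exact congrArg Prod.snd hab
      obtain ⟨C, hC⟩ := (mk_eq_zero_iff _).mp h1
      obtain ⟨D, hD⟩ := (mk_eq_zero_iff _).mp h2
      have hq := qpoly_ne_zero
      have hA : A = X 3 * C - X 1 * D := by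
        apply mul_right_cancel₀ hq
        linear_combination -(X 3 * hC) + X 1 * hD
      have hB : B = -(X 2 * C) + X 0 * D := by
        apply mul_right_cancel₀ hq
        linear_combination X 2 * hC - X 0 * hD
      refine ⟨(mkQ C, mkQ D), ?_⟩
      rw [hd1]
      refine Prod.ext ?_ ?_
      · show wR * mkQ C - yR * mkQ D = mkQ A
        rw [hA, wR_def, yR_def, map_sub, map_mul, map_mul]
      · show -(zR * mkQ C) + xR * mkQ D = mkQ B
        rw [hB, zR_def, xR_def, map_add, map_neg, map_mul, map_mul]
    · rintro p ⟨⟨c, d⟩, rfl⟩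
      rw [LinearMap.mem_ker, hd1, hd2]
      refine Prod.ext ?_ ?_
      · show xR * (wR * c - yR * d) + yR * (-(zR * c) + xR * d) = 0
        linear_combination c * hxw
      · show zR * (wR * c - yR * d) + wR * (-(zR * c) + xR * d) = 0
        linear_combination d * hxw
end
end

section
/- The sequence of A-modules 0 → A —φ→ A² —ψ→ J/J² → 0 is exact, where φ(c) = (wc, −zc) and ψ(a,b) is the class of ax + by in J/J². In particular, J/J² has projective dimension 1 as an A-module. -/
/-!
Setting: `R := ℂ[x,y,z,w]/(xw − yz)`, `J = (x,y) ⊆ R`, `A := R/J ≅ ℂ[z,w]`;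
the conormal module `J/J²` is an `A`-module (`Jid.Cotangent`).

STATEMENT 2: the sequence of `A`-modules `0 → A —φ→ A² —ψ→ J/J² → 0` is exact, where
`φ(c) = (wc, −zc)` and `ψ(a,b)` is the class of `ax + by` in `J/J²`.
In particular, `J/J²` has projective dimension 1 as an `A`-module (given the displayed
length-one free resolution, this amounts to `J/J²` not being projective).
-/

open MvPolynomial

set_option synthInstance.maxHeartbeats 1000000
set_option maxHeartbeats 1000000

noncomputable section

abbrev Aring : Type := Rring ⧸ Jid

def zA : Aring := Ideal.Quotient.mk _ zR
def wA : Aring := Ideal.Quotient.mk _ wR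

/-- The class of `x` in `J/J²`. -/
def xbar : Jid.Cotangent := Jid.toCotangent ⟨xR, Ideal.subset_span (Set.mem_insert _ _)⟩

/-- The class of `y` in `J/J²`. -/
def ybar : Jid.Cotangent := Jid.toCotangent ⟨yR, Ideal.subset_span (Set.mem_insert_of_mem _ rfl)⟩

-- the relation polynomial
def qpoly : Pring := X 0 * X 3 - X 1 * X 2

-- the quotient map P → A
def θ : Pring →+* Aring :=
  (Ideal.Quotient.mk Jid).comp (Ideal.Quotient.mk (Ideal.span {qpoly}))

lemma θ_surj : Function.Surjective θ :=
  (Ideal.Quotient.mk_surjective).comp (Ideal.Quotient.mk_surjective)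

lemma θ_X0 : θ (X 0) = 0 := by
  show Ideal.Quotient.mk Jid xR = 0
  rw [Ideal.Quotient.eq_zero_iff_mem]
  exact Ideal.subset_span (Set.mem_insert _ _)

lemma θ_X1 : θ (X 1) = 0 := by
  show Ideal.Quotient.mk Jid yR = 0
  rw [Ideal.Quotient.eq_zero_iff_mem]
  exact Ideal.subset_span (Set.mem_insert_of_mem _ rfl)

lemma θ_X2 : θ (X 2) = zA := rfl
lemma θ_X3 : θ (X 3) = wA := rfl

-- substitution x = y = 0
def σP : Pring →ₐ[ℂ] Pring := aeval ![0, 0, X 2, X 3]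

lemma σP_X0 : σP (X 0) = 0 := by simp [σP]
lemma σP_X1 : σP (X 1) = 0 := by simp [σP]
lemma σP_X2 : σP (X 2) = X 2 := by simp [σP]
lemma σP_X3 : σP (X 3) = X 3 := by simp [σP]

lemma θ_σP (p : Pring) : θ (σP p) = θ p := by
  have : θ.comp σP.toRingHom = θ := by
    apply MvPolynomial.ringHom_ext
    · intro r
      simp [σP]
    · intro i
      fin_cases i
      · simp [σP_X0, θ_X0]
      · simp [σP_X1, θ_X1]
      · simp [σP_X2]
      · simp [σP_X3]
  exact DFunLike.congr_fun this p

-- evaluation P → ℂ[z,w]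
abbrev P2 : Type := MvPolynomial (Fin 2) ℂ

def ev2 : Pring →+* P2 := (aeval ![0, 0, X 0, X 1] : Pring →ₐ[ℂ] P2).toRingHom

lemma ev2_q : ev2 qpoly = 0 := by simp [ev2, qpoly]

def εR : Rring →+* P2 :=
  Ideal.Quotient.lift _ ev2 (by
    intro p hp
    obtain ⟨c, rfl⟩ := Ideal.mem_span_singleton'.mp hp
    rw [map_mul]
    show _ * ev2 qpoly = 0
    rw [ev2_q, mul_zero])

def ε : Aring →+* P2 :=
  Ideal.Quotient.lift _ εR (by
    intro r hr
    have : Jid ≤ RingHom.ker εR := by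
      rw [Jid, Ideal.span_le]
      rintro s (rfl | rfl)
      · show ev2 (X 0) = 0; simp [ev2]
      · show ev2 (X 1) = 0; simp [ev2]
    exact this hr)

lemma ε_θ (p : Pring) : ε (θ p) = ev2 p := rfl

def ιA : P2 →+* Aring := (aeval ![zA, wA] : P2 →ₐ[ℂ] Aring).toRingHom

lemma ι_ε : ιA.comp ε = RingHom.id Aring := by
  have h : (ιA.comp ε).comp θ = θ := by
    apply MvPolynomial.ringHom_ext
    · intro r
      show ιA (ev2 (C r)) = θ (C r)
      simp [ev2, ιA, θ]
      rfl
    · intro i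
      show ιA (ev2 (X i)) = θ (X i)
      fin_cases i
      · simp [ev2, θ_X0]
      · simp [ev2, θ_X1]
      · simp [ev2, ιA, θ_X2]
      · simp [ev2, ιA, θ_X3]
  refine RingHom.ext fun a => ?_
  obtain ⟨p, rfl⟩ := θ_surj a
  exact DFunLike.congr_fun h p

lemma ε_inj : Function.Injective ε := by
  intro a b hab
  have := DFunLike.congr_fun ι_ε
  calc a = ιA (ε a) := (this a).symm
    _ = ιA (ε b) := by rw [hab]
    _ = b := this b

lemma ε_wA : ε wA = X 1 := by show ev2 (X 3) = X 1; simp [ev2]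
lemma ε_zA : ε zA = X 0 := by show ev2 (X 2) = X 0; simp [ev2]

-- evaluation A → ℂ at the origin
def ev0R : Rring →+* ℂ :=
  Ideal.Quotient.lift _ ((aeval (fun _ => (0:ℂ)) : Pring →ₐ[ℂ] ℂ).toRingHom) (by
    intro p hp
    obtain ⟨c, rfl⟩ := Ideal.mem_span_singleton'.mp hp
    simp)

def ev0 : Aring →+* ℂ :=
  Ideal.Quotient.lift _ ev0R (by
    intro r hr
    have : Jid ≤ RingHom.ker ev0R := by
      rw [Jid, Ideal.span_le]
      rintro s (rfl | rfl) <;> · show (aeval (fun _ => (0:ℂ))) _ = 0; simp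
    exact this hr)

lemma ev0_zA : ev0 zA = 0 := by show (aeval (fun _ => (0:ℂ))) (X 2) = 0; simp
lemma ev0_wA : ev0 wA = 0 := by show (aeval (fun _ => (0:ℂ))) (X 3) = 0; simp

-- the ideal (x, y) in P
def Kid : Ideal Pring := Ideal.span {X 0, X 1}

lemma σP_mem_K {p : Pring} (hp : p ∈ Kid) : σP p = 0 := by
  have : Kid ≤ RingHom.ker σP.toRingHom := by
    rw [Kid, Ideal.span_le]
    rintro s (rfl | rfl)
    · exact σP_X0
    · exact σP_X1
  exact this hp

lemma pderiv_mem_K {p : Pring} (i : Fin 4) (hp : p ∈ Kid ^ 2) :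
    pderiv i p ∈ Kid := by
  rw [pow_two] at hp
  refine Submodule.mul_induction_on hp ?_ ?_
  · intro m hm n hn
    rw [pderiv_mul]
    exact Kid.add_mem (Kid.mul_mem_left _ hn) (Kid.mul_mem_right _ hm)
  · intro a b ha hb
    rw [map_add]
    exact Kid.add_mem ha hb

lemma pderiv0_q : pderiv 0 qpoly = X 3 := by
  have h1 : (1 : Fin 4) ≠ 0 := by decide
  have h2 : (2 : Fin 4) ≠ 0 := by decide
  have h3 : (3 : Fin 4) ≠ 0 := by decide
  simp [qpoly, pderiv_mul, pderiv_X_self, pderiv_X_of_ne h1, pderiv_X_of_ne h2,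
    pderiv_X_of_ne h3]

lemma pderiv1_q : pderiv 1 qpoly = -(X 2) := by
  have h0 : (0 : Fin 4) ≠ 1 := by decide
  have h2 : (2 : Fin 4) ≠ 1 := by decide
  have h3 : (3 : Fin 4) ≠ 1 := by decide
  simp [qpoly, pderiv_mul, pderiv_X_self, pderiv_X_of_ne h0, pderiv_X_of_ne h2,
    pderiv_X_of_ne h3]

lemma σP_q : σP qpoly = 0 := by
  simp [qpoly, map_sub, map_mul, σP_X0, σP_X1]

/-- The key extraction: if `A·x + B·y = p + δ·q` with `p ∈ (x,y)²`, then
`σ A = σ δ * w` and `σ B = -(σ δ * z)`. -/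
lemma extract (A B p δ : Pring) (hp : p ∈ Kid ^ 2)
    (heq : A * X 0 + B * X 1 = p + δ * qpoly) :
    σP A = σP δ * X 3 ∧ σP B = -(σP δ * X 2) := by
  have h10 : (1 : Fin 4) ≠ 0 := by decide
  have h01 : (0 : Fin 4) ≠ 1 := by decide
  constructor
  · have := congrArg (fun t => σP (pderiv 0 t)) heq
    simp only [map_add, pderiv_mul, pderiv_X_self, pderiv_X_of_ne h10, map_mul,
      mul_one, mul_zero, add_zero, σP_X0, σP_X1, zero_mul, mul_zero, zero_add,
      σP_mem_K (pderiv_mem_K 0 hp), pderiv0_q, σP_X3, σP_q] at this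
    simpa using this
  · have := congrArg (fun t => σP (pderiv 1 t)) heq
    simp only [map_add, pderiv_mul, pderiv_X_self, pderiv_X_of_ne h01, map_mul,
      mul_one, mul_zero, add_zero, σP_X0, σP_X1, zero_mul, mul_zero, zero_add,
      σP_mem_K (pderiv_mem_K 1 hp), pderiv1_q, σP_X2, σP_q] at this
    simpa [σP] using this

lemma xR_mem : xR ∈ Jid := Ideal.subset_span (Set.mem_insert _ _)
lemma yR_mem : yR ∈ Jid := Ideal.subset_span (Set.mem_insert_of_mem _ rfl)

lemma xbar_eq : xbar = Jid.toCotangent ⟨xR, xR_mem⟩ := rfl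
lemma ybar_eq : ybar = Jid.toCotangent ⟨yR, yR_mem⟩ := rfl

lemma mkJ_smul (r : Rring) (m : Jid.Cotangent) : (Ideal.Quotient.mk Jid r) • m = r • m := rfl

lemma smul_gen (r v : Rring) (hv : v ∈ Jid) :
    r • Jid.toCotangent ⟨v, hv⟩ = Jid.toCotangent ⟨r * v, Jid.mul_mem_left r hv⟩ := by
  rw [← map_smul]; rfl

lemma relR : wR * xR - zR * yR = (0 : Rring) := by
  have h : (Ideal.Quotient.mk (Ideal.span {qpoly})) (X 3 * X 0 - X 2 * X 1) = 0 :=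
    Ideal.Quotient.eq_zero_iff_mem.mpr
      (by rw [show (X 3 * X 0 - X 2 * X 1 : Pring) = qpoly by rw [qpoly]; ring]
          exact Ideal.subset_span rfl)
  exact (show wR * xR - zR * yR
      = (Ideal.Quotient.mk (Ideal.span {qpoly})) (X 3 * X 0 - X 2 * X 1) by
        simp only [wR, xR, zR, yR, qpoly, map_sub, map_mul]
        rw [← map_mul, ← map_mul, ← map_sub]
        rfl).trans h

lemma Jid_map : Jid = Kid.map (Ideal.Quotient.mk (Ideal.span {qpoly})) := by
  rw [Kid, Ideal.map_span]
  rw [Set.image_insert_eq, Set.image_singleton]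
  rfl

-- ψ ∘ φ = 0 helper : for any lift cr
lemma psi_phi_zero (cr : Rring) :
    ((Ideal.Quotient.mk Jid (wR * cr)) • xbar + (Ideal.Quotient.mk Jid (-(zR * cr))) • ybar
      : Jid.Cotangent) = 0 := by
  rw [mkJ_smul, mkJ_smul, xbar_eq, ybar_eq, smul_gen, smul_gen, ← map_add,
    Ideal.toCotangent_eq_zero]
  show wR * cr * xR + -(zR * cr) * yR ∈ Jid ^ 2
  have h : wR * cr * xR + -(zR * cr) * yR = 0 := by
    have h2 : wR * cr * xR + -(zR * cr) * yR = cr * (wR * xR - zR * yR) := by ring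
    rw [h2, relR, mul_zero]
  rw [h]
  exact zero_mem _

lemma hker_aux (a b : Aring) (h : a • xbar + b • ybar = 0) :
    ∃ c : Aring, wA * c = a ∧ -(zA * c) = b := by
  obtain ⟨Ar, rfl⟩ := θ_surj a
  obtain ⟨Br, rfl⟩ := θ_surj b
  -- rewrite the hypothesis as a cotangent class
  have h0 : ((Ideal.Quotient.mk (Ideal.span {qpoly}) (Ar * X 0 + Br * X 1) : Rring))
      ∈ Jid ^ 2 := by
    have h1 : θ Ar • xbar + θ Br • ybar =
        Jid.toCotangent ⟨Ideal.Quotient.mk (Ideal.span {qpoly}) (Ar * X 0 + Br * X 1),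
          by rw [map_add, map_mul, map_mul]
             exact Jid.add_mem (Jid.mul_mem_left _ xR_mem) (Jid.mul_mem_left _ yR_mem)⟩ := by
      show (Ideal.Quotient.mk Jid (Ideal.Quotient.mk _ Ar)) • xbar
          + (Ideal.Quotient.mk Jid (Ideal.Quotient.mk _ Br)) • ybar = _
      rw [mkJ_smul, mkJ_smul, xbar_eq, ybar_eq, smul_gen, smul_gen, ← map_add]
      congr 1
    rw [h1, Ideal.toCotangent_eq_zero] at h
    exact h
  -- pull the membership back to P
  replace h0 : (Ideal.Quotient.mk (Ideal.span {qpoly}) (Ar * X 0 + Br * X 1))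
      ∈ (Kid ^ 2).map (Ideal.Quotient.mk (Ideal.span {qpoly})) := by
    rw [Ideal.map_pow, ← Jid_map]; exact h0
  obtain ⟨p, hpK, hp⟩ := Ideal.mem_map_iff_of_surjective _ Ideal.Quotient.mk_surjective |>.mp h0
  have hd : Ar * X 0 + Br * X 1 - p ∈ Ideal.span {qpoly} := by
    rw [← Ideal.Quotient.eq_zero_iff_mem, map_sub, hp, sub_self]
  obtain ⟨δ, hδ⟩ := Ideal.mem_span_singleton'.mp hd
  have heq : Ar * X 0 + Br * X 1 = p + δ * qpoly := by
    rw [hδ]; ring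
  obtain ⟨hA, hB⟩ := extract Ar Br p δ hpK heq
  refine ⟨θ (σP δ), ?_, ?_⟩
  · rw [← θ_σP Ar, hA, map_mul, θ_X3]; ring
  · rw [← θ_σP Br, hB, map_neg, map_mul, θ_X2]; ring

theorem stmt_2 (φ : Aring →ₗ[Aring] Aring × Aring)
    (ψ : Aring × Aring →ₗ[Aring] Jid.Cotangent)
    (hφ : ∀ c : Aring, φ c = (wA * c, -(zA * c)))
    (hψ : ∀ a b : Aring, ψ (a, b) = a • xbar + b • ybar) :
    Function.Injective φ ∧
    LinearMap.ker ψ = LinearMap.range φ ∧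
    Function.Surjective ψ ∧
    ¬ Module.Projective Aring Jid.Cotangent := by
  -- injectivity
  have hinj : Function.Injective φ := by
    intro c c' h
    rw [hφ c, hφ c', Prod.mk.injEq] at h
    have h1 : ε wA * ε c = ε wA * ε c' := by rw [← map_mul, ← map_mul, h.1]
    have h2 : ε c = ε c' := mul_left_cancel₀ (by rw [ε_wA]; exact X_ne_zero 1) h1
    exact ε_inj h2
  -- ψ ∘ φ = 0
  have hψφ : ∀ c : Aring, ψ (φ c) = 0 := by
    intro c
    obtain ⟨cr, rfl⟩ := Ideal.Quotient.mk_surjective (I := Jid) c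
    rw [hφ, hψ]
    have hw : wA * Ideal.Quotient.mk Jid cr = Ideal.Quotient.mk Jid (wR * cr) := rfl
    have hz : -(zA * Ideal.Quotient.mk Jid cr) = Ideal.Quotient.mk Jid (-(zR * cr)) := by
      rw [map_neg]; rfl
    rw [hw, hz]
    exact psi_phi_zero cr
  -- kernel = range
  have hker : LinearMap.ker ψ = LinearMap.range φ := by
    ext v
    rw [LinearMap.mem_ker, LinearMap.mem_range]
    constructor
    · intro hv
      have hv' : v.1 • xbar + v.2 • ybar = 0 := by rw [← hψ]; exact hv
      obtain ⟨c, hc1, hc2⟩ := hker_aux v.1 v.2 hv'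
      exact ⟨c, by rw [hφ]; exact Prod.ext hc1 hc2⟩
    · rintro ⟨c, rfl⟩
      exact hψφ c
  -- surjectivity
  have hsurj : Function.Surjective ψ := by
    intro m
    obtain ⟨⟨v, hv⟩, rfl⟩ := Jid.toCotangent_surjective m
    obtain ⟨c, d, hcd⟩ := Ideal.mem_span_pair.mp hv
    refine ⟨(Ideal.Quotient.mk Jid c, Ideal.Quotient.mk Jid d), ?_⟩
    rw [hψ, mkJ_smul, mkJ_smul, xbar_eq, ybar_eq, smul_gen, smul_gen, ← map_add]
    congr 1
    exact Subtype.ext hcd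
  refine ⟨hinj, hker, hsurj, ?_⟩
  -- non-projectivity
  intro hproj
  obtain ⟨s, hs⟩ := Module.projective_lifting_property ψ LinearMap.id hsurj
  set L : Aring × Aring →ₗ[Aring] Aring × Aring := LinearMap.id - s.comp ψ with hL
  have hψL : ∀ v, ψ (L v) = 0 := by
    intro v
    have h := DFunLike.congr_fun hs (ψ v)
    simp only [LinearMap.comp_apply, LinearMap.id_apply] at h
    simp only [hL, LinearMap.sub_apply, LinearMap.id_apply, LinearMap.comp_apply, map_sub, h,
      sub_self]
  have h10 := hψL (1, 0)
  have h01 := hψL (0, 1)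
  rw [show ψ (L (1,0)) = (L (1,0)).1 • xbar + (L (1,0)).2 • ybar by rw [← hψ]] at h10
  rw [show ψ (L (0,1)) = (L (0,1)).1 • xbar + (L (0,1)).2 • ybar by rw [← hψ]] at h01
  obtain ⟨p, hp1, hp2⟩ := hker_aux _ _ h10
  obtain ⟨q, hq1, hq2⟩ := hker_aux _ _ h01
  -- L (φ 1) = φ 1
  have hLφ : L (φ 1) = φ 1 := by
    simp only [hL, LinearMap.sub_apply, LinearMap.id_apply, LinearMap.comp_apply, hψφ 1,
      map_zero, sub_zero]
  have hdecomp : φ 1 = wA • ((1:Aring), (0:Aring)) + (-zA) • ((0:Aring), (1:Aring)) := by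
    rw [hφ]
    ext <;> simp <;> ring
  have key : φ 1 = φ (wA * p + (-zA) * q) := by
    calc φ 1 = L (φ 1) := hLφ.symm
      _ = wA • L (1, 0) + (-zA) • L (0, 1) := by rw [hdecomp, map_add, map_smul, map_smul]
      _ = wA • φ p + (-zA) • φ q := by
          have hp : φ p = L (1, 0) := by rw [hφ]; exact Prod.ext hp1 hp2
          have hq : φ q = L (0, 1) := by rw [hφ]; exact Prod.ext hq1 hq2
          rw [hp, hq]
      _ = φ (wA * p + (-zA) * q) := by
          rw [← map_smul, ← map_smul, ← map_add]; rfl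
  have h1 : (1 : Aring) = wA * p + (-zA) * q := hinj key
  have := congrArg ev0 h1
  rw [map_one, map_add, map_mul, map_mul, map_neg, ev0_wA, ev0_zA] at this
  simp at this
end
end

section
/- The map φ ↦ (φ(x̄), φ(ȳ)) identifies the A-module Hom_A(J/J², A) with the submodule {(a,b) ∈ A² : wa = zb} of A²; this submodule equals {(cz, cw) : c ∈ A}, and consequently Hom_A(J/J², A) is a free A-module of rank 1 (generated by the homomorphism sending x̄ ↦ z, ȳ ↦ w). Here x̄, ȳ denote the classes of x, y in J/J². -/
/-!
Setting: `R := ℂ[x,y,z,w]/(xw − yz)`, `J = (x,y) ⊆ R`, `A := R/J ≅ ℂ[z,w]`;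
the conormal module `J/J²` is an `A`-module, with `x̄, ȳ` the classes of `x, y`.

STATEMENT 3: the `A`-linear map `φ ↦ (φ(x̄), φ(ȳ))` identifies `Hom_A(J/J², A)` with the
submodule `{(a,b) ∈ A² : wa = zb}` of `A²`; this submodule equals `{(cz, cw) : c ∈ A}`, and
consequently `Hom_A(J/J², A)` is free of rank 1, generated by the homomorphism `x̄ ↦ z, ȳ ↦ w`.
-/

open MvPolynomial

set_option synthInstance.maxHeartbeats 1000000
set_option maxHeartbeats 1000000

noncomputable section

instance aringSMulCommClass : SMulCommClass Aring Aring Aring := smulCommClass_self Aring Aring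

abbrev IP : Ideal Pring := Ideal.span {(X 0 * X 3 - X 1 * X 2 : Pring)}

def piA : Pring →+* Aring := (Ideal.Quotient.mk Jid).comp (Ideal.Quotient.mk IP)

/-- The "derivative" map implementing `a x + b y ↦ a z + b w` mod J. -/
def Dmap (p : Pring) : Aring := piA (pderiv 0 p * X 2 + pderiv 1 p * X 3)

lemma Dmap_add (p q : Pring) : Dmap (p + q) = Dmap p + Dmap q := by
  unfold Dmap
  rw [← map_add]
  congr 1
  rw [map_add, map_add]
  ring

lemma Dmap_sub (p q : Pring) : Dmap (p - q) = Dmap p - Dmap q := by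
  unfold Dmap
  rw [← map_sub]
  congr 1
  rw [map_sub, map_sub]
  ring

lemma Dmap_mul (p q : Pring) : Dmap (p * q) = piA p * Dmap q + piA q * Dmap p := by
  unfold Dmap
  rw [pderiv_mul, pderiv_mul, ← map_mul, ← map_mul, ← map_add]
  congr 1
  ring

lemma piA_f : piA (X 0 * X 3 - X 1 * X 2 : Pring) = 0 := by
  have : (Ideal.Quotient.mk IP) (X 0 * X 3 - X 1 * X 2 : Pring) = 0 :=
    Ideal.Quotient.eq_zero_iff_mem.mpr (Ideal.subset_span rfl)
  show (Ideal.Quotient.mk Jid) ((Ideal.Quotient.mk IP) _) = 0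
  rw [this, map_zero]

lemma Dmap_f : Dmap (X 0 * X 3 - X 1 * X 2 : Pring) = 0 := by
  have h0 : pderiv (0 : Fin 4) (X 0 * X 3 - X 1 * X 2 : Pring) = X 3 := by
    rw [map_sub, pderiv_mul, pderiv_mul, pderiv_X_self,
      pderiv_X_of_ne (by decide : (3:Fin 4) ≠ 0), pderiv_X_of_ne (by decide : (1:Fin 4) ≠ 0),
      pderiv_X_of_ne (by decide : (2:Fin 4) ≠ 0)]
    ring
  have h1 : pderiv (1 : Fin 4) (X 0 * X 3 - X 1 * X 2 : Pring) = -(X 2) := by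
    rw [map_sub, pderiv_mul, pderiv_mul, pderiv_X_self,
      pderiv_X_of_ne (by decide : (3:Fin 4) ≠ 1), pderiv_X_of_ne (by decide : (0:Fin 4) ≠ 1),
      pderiv_X_of_ne (by decide : (2:Fin 4) ≠ 1)]
    ring
  rw [Dmap, h0, h1]
  rw [show (X 3 * X 2 + -(X 2) * X 3 : Pring) = 0 by ring, map_zero]

lemma Dmap_ker {p : Pring} (hp : p ∈ IP) : Dmap p = 0 := by
  rw [Ideal.mem_span_singleton] at hp
  obtain ⟨q, rfl⟩ := hp
  rw [Dmap_mul, Dmap_f, piA_f]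
  exact (congrArg₂ (· + ·) (zero_mul (Dmap q)) (mul_zero (piA q))).trans (add_zero (0 : Aring))

lemma Dmap_welldef {p q : Pring} (h : Ideal.Quotient.mk IP p = Ideal.Quotient.mk IP q) :
    Dmap p = Dmap q := by
  have hm : p - q ∈ IP := Ideal.Quotient.eq.mp h
  have h2 := Dmap_ker hm
  rw [Dmap_sub] at h2
  exact sub_eq_zero.mp h2

def Dbar (r : Rring) : Aring :=
  Dmap (Ideal.Quotient.mk_surjective (I := IP) r).choose

lemma Dbar_mk (p : Pring) : Dbar (Ideal.Quotient.mk IP p) = Dmap p :=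
  Dmap_welldef ((Ideal.Quotient.mk_surjective (Ideal.Quotient.mk IP p)).choose_spec)

lemma Dbar_add (r s : Rring) : Dbar (r + s) = Dbar r + Dbar s := by
  obtain ⟨p, rfl⟩ := Ideal.Quotient.mk_surjective (I := IP) r
  obtain ⟨q, rfl⟩ := Ideal.Quotient.mk_surjective (I := IP) s
  rw [← map_add, Dbar_mk, Dbar_mk, Dbar_mk, Dmap_add]

lemma Dbar_mul_mem {r n : Rring} (hn : n ∈ Jid) :
    Dbar (r * n) = Ideal.Quotient.mk Jid r * Dbar n := by
  obtain ⟨p, rfl⟩ := Ideal.Quotient.mk_surjective (I := IP) r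
  obtain ⟨q, rfl⟩ := Ideal.Quotient.mk_surjective (I := IP) n
  have hq : piA q = 0 := by
    show (Ideal.Quotient.mk Jid) ((Ideal.Quotient.mk IP) q) = 0
    exact Ideal.Quotient.eq_zero_iff_mem.mpr hn
  rw [← map_mul, Dbar_mk, Dbar_mk, Dmap_mul, hq]
  refine (congrArg (_ + ·) (zero_mul (Dmap p))).trans ((add_zero (piA p * Dmap q)).trans ?_)
  rfl

lemma smul_A (r s : Rring) :
    r • (Ideal.Quotient.mk Jid s) = Ideal.Quotient.mk Jid (r * s) := rfl

lemma smul_A' (r : Rring) (a : Aring) : r • a = Ideal.Quotient.mk Jid r * a := by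
  obtain ⟨s, rfl⟩ := Ideal.Quotient.mk_surjective (I := Jid) a
  rw [smul_A, ← map_mul]

def gR : Jid →ₗ[Rring] Aring where
  toFun m := Dbar m.1
  map_add' m n := Dbar_add m.1 n.1
  map_smul' r m := by
    simp only [RingHom.id_apply]
    rw [smul_A' r (Dbar m.1)]
    exact Dbar_mul_mem m.2

lemma gR_ker : (Jid • ⊤ : Submodule Rring Jid) ≤ LinearMap.ker gR := by
  rw [Submodule.smul_le]
  intro r hr m _
  rw [LinearMap.mem_ker, map_smul, smul_A' r (gR m),
    Ideal.Quotient.eq_zero_iff_mem.mpr hr]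
  exact zero_mul (gR m)

def phi' : Jid.Cotangent →ₗ[Rring] Aring := Submodule.liftQ _ gR gR_ker

lemma phi'_toCot (m : Jid) : phi' (Jid.toCotangent m) = Dbar m.1 := rfl

lemma cot_smul (r : Rring) (m : Jid) :
    (Ideal.Quotient.mk Jid r) • Jid.toCotangent m = Jid.toCotangent (r • m) := rfl

def phi0 : Jid.Cotangent →ₗ[Aring] Aring where
  toFun := phi'
  map_add' := phi'.map_add
  map_smul' c t := by
    obtain ⟨r, rfl⟩ := Ideal.Quotient.mk_surjective (I := Jid) c
    obtain ⟨m, rfl⟩ := Jid.toCotangent_surjective t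
    simp only [RingHom.id_apply, smul_eq_mul]
    rw [cot_smul, phi'_toCot, phi'_toCot]
    exact Dbar_mul_mem m.2

lemma phi0_x : phi0 xbar = zA := by
  show phi' (Jid.toCotangent _) = zA
  rw [phi'_toCot]
  show Dbar (Ideal.Quotient.mk IP (X 0)) = zA
  rw [Dbar_mk]
  show piA (pderiv 0 (X 0) * X 2 + pderiv 1 (X 0) * X 3) = zA
  rw [pderiv_X_self, pderiv_X_of_ne (by decide : (0:Fin 4) ≠ 1)]
  rw [show ((1 : Pring) * X 2 + 0 * X 3) = X 2 by ring]
  rfl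

lemma phi0_y : phi0 ybar = wA := by
  show phi' (Jid.toCotangent _) = wA
  rw [phi'_toCot]
  show Dbar (Ideal.Quotient.mk IP (X 1)) = wA
  rw [Dbar_mk]
  show piA (pderiv 0 (X 1) * X 2 + pderiv 1 (X 1) * X 3) = wA
  rw [pderiv_X_self, pderiv_X_of_ne (by decide : (1:Fin 4) ≠ 0)]
  rw [show ((0 : Pring) * X 2 + 1 * X 3) = X 3 by ring]
  rfl

lemma rel_xy : wA • xbar = zA • ybar := by
  show (Ideal.Quotient.mk Jid wR) • Jid.toCotangent _ = (Ideal.Quotient.mk Jid zR) • Jid.toCotangent _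
  rw [cot_smul, cot_smul]
  congr 1
  apply Subtype.ext
  show wR • xR = zR • yR
  show wR * xR = zR * yR
  show Ideal.Quotient.mk IP (X 3) * Ideal.Quotient.mk IP (X 0)
      = Ideal.Quotient.mk IP (X 2) * Ideal.Quotient.mk IP (X 1)
  rw [← map_mul, ← map_mul]
  apply Ideal.Quotient.eq.mpr
  apply Ideal.subset_span
  show X 3 * X 0 - X 2 * X 1 ∈ _
  rw [show (X 3 * X 0 - X 2 * X 1 : Pring) = X 0 * X 3 - X 1 * X 2 by ring]
  rfl

lemma span_xy : Submodule.span Aring {xbar, ybar} = ⊤ := by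
  rw [eq_top_iff]
  rintro t -
  obtain ⟨m, rfl⟩ := Jid.toCotangent_surjective t
  obtain ⟨a, b, hab⟩ := Ideal.mem_span_pair.mp m.2
  have hm : m = a • (⟨xR, xR_mem⟩ : Jid) + b • (⟨yR, yR_mem⟩ : Jid) := by
    apply Subtype.ext
    show m.1 = a * xR + b * yR
    exact hab.symm
  rw [hm, map_add, map_smul, map_smul]
  have h1 : a • xbar = (Ideal.Quotient.mk Jid a) • xbar := rfl
  have h2 : b • ybar = (Ideal.Quotient.mk Jid b) • ybar := rfl
  show a • xbar + b • ybar ∈ _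
  rw [h1, h2]
  exact Submodule.add_mem _
    (Submodule.smul_mem _ _ (Submodule.subset_span (Set.mem_insert _ _)))
    (Submodule.smul_mem _ _ (Submodule.subset_span (Set.mem_insert_of_mem _ rfl)))

lemma hom_ext {φ ψ : Jid.Cotangent →ₗ[Aring] Aring}
    (hx : φ xbar = ψ xbar) (hy : φ ybar = ψ ybar) : φ = ψ := by
  apply LinearMap.ext_on span_xy
  rintro v (rfl | rfl)
  · exact hx
  · exact hy

abbrev Qring : Type := Polynomial (Polynomial ℂ)

def hhom : Pring →+* Qring :=
  (MvPolynomial.eval₂Hom (Polynomial.C.comp Polynomial.C)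
    ![0, 0, Polynomial.X, Polynomial.C Polynomial.X] : Pring →+* Qring)

lemma hhom_f : hhom (X 0 * X 3 - X 1 * X 2 : Pring) = 0 := by
  simp [hhom]

def lift1 : Rring →+* Qring :=
  Ideal.Quotient.lift _ hhom (by
    intro a ha
    rw [Ideal.mem_span_singleton] at ha
    obtain ⟨q, rfl⟩ := ha
    rw [map_mul, hhom_f, zero_mul])

lemma lift1_mk (p : Pring) : lift1 (Ideal.Quotient.mk IP p) = hhom p := rfl

def alpha : Aring →+* Qring :=
  Ideal.Quotient.lift Jid lift1 (by
    intro a ha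
    have hle : Jid ≤ RingHom.ker lift1 := by
      rw [Jid, Ideal.span_le]
      rintro r (rfl | rfl)
      · show lift1 xR = 0
        show hhom (X 0) = 0
        simp [hhom]
      · show hhom (X 1) = 0
        simp [hhom]
    exact hle ha)

lemma alpha_mk (r : Rring) : alpha (Ideal.Quotient.mk Jid r) = lift1 r := rfl

lemma alpha_zA : alpha zA = Polynomial.X := by
  show hhom (X 2) = Polynomial.X
  simp [hhom]

lemma alpha_wA : alpha wA = Polynomial.C Polynomial.X := by
  show hhom (X 3) = Polynomial.C Polynomial.X
  simp [hhom]

def beta : Qring →+* Aring :=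
  Polynomial.eval₂RingHom
    (Polynomial.eval₂RingHom (algebraMap ℂ Aring) wA) zA

lemma beta_X : beta Polynomial.X = zA := by simp [beta]

lemma beta_CX : beta (Polynomial.C Polynomial.X) = wA := by simp [beta]

lemma beta_CC (c : ℂ) : beta (Polynomial.C (Polynomial.C c)) = @algebraMap ℂ Aring _ _ (Ideal.instAlgebraQuotient ℂ Jid) c := by
  simp [beta]

lemma algebraMap_A (c : ℂ) : @algebraMap ℂ Aring _ _ (Ideal.instAlgebraQuotient ℂ Jid) c = piA (C c) := by
  rw [IsScalarTower.algebraMap_apply ℂ Rring Aring,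
      IsScalarTower.algebraMap_apply ℂ Pring Rring]
  rfl

lemma alpha_C (c : ℂ) : alpha (@algebraMap ℂ Aring _ _ (Ideal.instAlgebraQuotient ℂ Jid) c) = Polynomial.C (Polynomial.C c) := by
  rw [algebraMap_A]
  show hhom (C c) = _
  simp [hhom]

lemma beta_alpha (a : Aring) : beta (alpha a) = a := by
  have : (beta.comp alpha) = RingHom.id Aring := by
    apply Ideal.Quotient.ringHom_ext
    apply Ideal.Quotient.ringHom_ext
    apply MvPolynomial.ringHom_ext
    · intro c
      show beta (alpha (piA (C c))) = piA (C c)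
      rw [← algebraMap_A, alpha_C, beta_CC]
    · intro i
      fin_cases i
      · show beta (alpha (Ideal.Quotient.mk Jid xR)) = Ideal.Quotient.mk Jid xR
        have : Ideal.Quotient.mk Jid xR = 0 := Ideal.Quotient.eq_zero_iff_mem.mpr
          (Ideal.subset_span (Set.mem_insert _ _))
        rw [this, map_zero, map_zero]
      · show beta (alpha (Ideal.Quotient.mk Jid yR)) = Ideal.Quotient.mk Jid yR
        have : Ideal.Quotient.mk Jid yR = 0 := Ideal.Quotient.eq_zero_iff_mem.mpr
          (Ideal.subset_span (Set.mem_insert_of_mem _ rfl))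
        rw [this, map_zero, map_zero]
      · show beta (alpha zA) = zA
        rw [alpha_zA, beta_X]
      · show beta (alpha wA) = wA
        rw [alpha_wA, beta_CX]
  exact DFunLike.congr_fun this a

lemma alpha_beta (q : Qring) : alpha (beta q) = q := by
  have : (alpha.comp beta) = RingHom.id Qring := by
    apply Polynomial.ringHom_ext
    · intro p
      show alpha (beta (Polynomial.C p)) = Polynomial.C p
      have : ((alpha.comp beta).comp Polynomial.C) = (Polynomial.C : Polynomial ℂ →+* Qring) := by
        apply Polynomial.ringHom_ext
        · intro c
          show alpha (beta (Polynomial.C (Polynomial.C c))) = _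
          rw [beta_CC, alpha_C]
        · show alpha (beta (Polynomial.C Polynomial.X)) = _
          rw [beta_CX, alpha_wA]
      exact DFunLike.congr_fun this p
    · show alpha (beta Polynomial.X) = Polynomial.X
      rw [beta_X, alpha_zA]
  exact DFunLike.congr_fun this q

lemma cancel_zA {c c' : Aring} (h : c * zA = c' * zA) : c = c' := by
  have h2 : alpha c * Polynomial.X = alpha c' * Polynomial.X := by
    rw [← alpha_zA, ← map_mul, ← map_mul, h]
  have := mul_right_cancel₀ Polynomial.X_ne_zero h2
  calc c = beta (alpha c) := (beta_alpha c).symm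
    _ = beta (alpha c') := by rw [this]
    _ = c' := beta_alpha c'

lemma div_fact {a b : Aring} (h : wA * a = zA * b) :
    ∃ c : Aring, a = c * zA ∧ b = c * wA := by
  have h2 : Polynomial.C Polynomial.X * alpha a = Polynomial.X * alpha b := by
    rw [← alpha_wA, ← alpha_zA, ← map_mul, ← map_mul, h]
  have hprime : Prime (Polynomial.X : Qring) := Polynomial.prime_X
  have hndvd : ¬ (Polynomial.X : Qring) ∣ Polynomial.C Polynomial.X := by
    rw [Polynomial.X_dvd_iff, Polynomial.coeff_C]
    simp [Polynomial.X_ne_zero]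
  have hdvd : (Polynomial.X : Qring) ∣ Polynomial.C Polynomial.X * alpha a := ⟨alpha b, h2⟩
  have : (Polynomial.X : Qring) ∣ alpha a := (hprime.dvd_mul.mp hdvd).resolve_left hndvd
  obtain ⟨u, hu⟩ := this
  have hb : alpha b = Polynomial.C Polynomial.X * u := by
    apply mul_left_cancel₀ (Polynomial.X_ne_zero : (Polynomial.X : Qring) ≠ 0)
    rw [← h2, hu]; ring
  refine ⟨beta u, ?_, ?_⟩
  · calc a = beta (alpha a) := (beta_alpha a).symm
      _ = beta (Polynomial.X * u) := by rw [hu]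
      _ = beta u * zA := by rw [map_mul, beta_X]; ring
  · calc b = beta (alpha b) := (beta_alpha b).symm
      _ = beta (Polynomial.C Polynomial.X * u) := by rw [hb]
      _ = beta u * wA := by rw [map_mul, beta_CX]; ring

theorem stmt_3 (Φ : (Jid.Cotangent →ₗ[Aring] Aring) →ₗ[Aring] Aring × Aring)
    (hΦ : ∀ φ : Jid.Cotangent →ₗ[Aring] Aring, Φ φ = (φ xbar, φ ybar)) :
    Function.Injective Φ ∧
    (LinearMap.range Φ : Set (Aring × Aring)) = {p : Aring × Aring | wA * p.1 = zA * p.2} ∧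
    {p : Aring × Aring | wA * p.1 = zA * p.2} =
      Set.range (fun c : Aring => (c * zA, c * wA)) ∧
    ∃ φ₀ : Jid.Cotangent →ₗ[Aring] Aring, φ₀ xbar = zA ∧ φ₀ ybar = wA ∧
      ∀ ψ : Jid.Cotangent →ₗ[Aring] Aring, ∃! c : Aring, ψ = c • φ₀ := by
  have hrel : ∀ φ : Jid.Cotangent →ₗ[Aring] Aring, wA * φ xbar = zA * φ ybar := by
    intro φ
    have e1 : wA * φ xbar = φ (wA • xbar) := by rw [map_smul, smul_eq_mul]
    have e2 : zA * φ ybar = φ (zA • ybar) := by rw [map_smul, smul_eq_mul]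
    rw [e1, e2, rel_xy]
  have hinj : Function.Injective Φ := by
    intro φ ψ h
    rw [hΦ, hΦ] at h
    exact hom_ext (congrArg Prod.fst h) (congrArg Prod.snd h)
  have hseteq : {p : Aring × Aring | wA * p.1 = zA * p.2} =
      Set.range (fun c : Aring => (c * zA, c * wA)) := by
    ext p
    constructor
    · intro hp
      obtain ⟨c, h1, h2⟩ := div_fact hp
      exact ⟨c, Prod.ext h1.symm h2.symm⟩
    · rintro ⟨c, rfl⟩
      show wA * (c * zA) = zA * (c * wA)
      ring
  refine ⟨hinj, ?_, hseteq, ?_⟩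
  · ext p
    constructor
    · rintro ⟨φ, rfl⟩
      rw [hΦ]
      exact hrel φ
    · intro hp
      obtain ⟨c, h1, h2⟩ := div_fact hp
      refine ⟨c • phi0, ?_⟩
      rw [hΦ]
      have e1 : (c • phi0) xbar = c * zA := by
        rw [LinearMap.smul_apply, phi0_x, smul_eq_mul]
      have e2 : (c • phi0) ybar = c * wA := by
        rw [LinearMap.smul_apply, phi0_y, smul_eq_mul]
      rw [e1, e2]
      exact Prod.ext h1.symm h2.symm
  · refine ⟨phi0, phi0_x, phi0_y, fun ψ => ?_⟩
    obtain ⟨c, h1, h2⟩ := div_fact (hrel ψ)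
    refine ⟨c, ?_, ?_⟩
    · apply hom_ext
      · rw [h1, LinearMap.smul_apply, phi0_x, smul_eq_mul]
      · rw [h2, LinearMap.smul_apply, phi0_y, smul_eq_mul]
    · intro c' hc'
      apply cancel_zA
      have hx' : ψ xbar = c' * zA := by
        rw [hc', LinearMap.smul_apply, phi0_x, smul_eq_mul]
      rw [← hx', h1]
end
end

section
/- Let d and g be integers with d ≥ 1 and g ≥ 0 satisfying one of: g = 0; g = 1 and d ≥ 3; g = 2 and d ≥ 5; 3 ≤ g ≤ 8 and d ≥ g + 4; 9 ≤ g ≤ 11 and d ≥ g + 3; 12 ≤ g ≤ 15 and 2d ≥ g + 16. Then at least one of the following three conditions holds: (C1) 8g < d² and (d,g) ≠ (5,3) and (d ≤ 4 or d ≥ g + 3) and g ≤ 1; (C2) [12g = d² + 3, or (12g < d² and (d,g) ≠ (7,4))] and (d ≤ 6 or d ≥ g + 4) and g ≤ 13; (C3) [(16g = d² and d ≡ 4 (mod 8)) or (16g < d² and (d,g) ≠ (9,5))] and (d ≤ 16 or 2d ≥ g + 17) and g ≤ 15. -/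
/-!
STATEMENT 15: for integers `d ≥ 1`, `g ≥ 0` in the degree–genus list of Theorem 2(b)
(CICY of type (4,2) in ℙ⁵), at least one of the numerical conditions (C1), (C2), (C3)
(for the constructions via K3 surfaces of types (4) ⊂ ℙ³, (2,3) ⊂ ℙ⁴, (2,2,2) ⊂ ℙ⁵) holds.
-/

theorem stmt_15 (d g : ℤ) (hd : 1 ≤ d) (hg : 0 ≤ g)
    (h : g = 0 ∨
      (g = 1 ∧ d ≥ 3) ∨
      (g = 2 ∧ d ≥ 5) ∨
      (3 ≤ g ∧ g ≤ 8 ∧ d ≥ g + 4) ∨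
      (9 ≤ g ∧ g ≤ 11 ∧ d ≥ g + 3) ∨
      (12 ≤ g ∧ g ≤ 15 ∧ 2 * d ≥ g + 16)) :
    (8 * g < d ^ 2 ∧ ¬(d = 5 ∧ g = 3) ∧ (d ≤ 4 ∨ d ≥ g + 3) ∧ g ≤ 1) ∨
    ((12 * g = d ^ 2 + 3 ∨ (12 * g < d ^ 2 ∧ ¬(d = 7 ∧ g = 4))) ∧
      (d ≤ 6 ∨ d ≥ g + 4) ∧ g ≤ 13) ∨
    (((16 * g = d ^ 2 ∧ d % 8 = 4) ∨ (16 * g < d ^ 2 ∧ ¬(d = 9 ∧ g = 5))) ∧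
      (d ≤ 16 ∨ 2 * d ≥ g + 17) ∧ g ≤ 15) := by
  rcases h with h0 | ⟨h1, hd3⟩ | ⟨h2, hd5⟩ | ⟨h3, h8, hdg⟩ | ⟨h9, h11, hdg⟩ | ⟨h12, h15, hdg⟩
  · left
    exact ⟨by nlinarith, by omega, by omega, by omega⟩
  · left
    exact ⟨by nlinarith, by omega, by omega, by omega⟩
  · right; left
    exact ⟨Or.inr ⟨by nlinarith, by omega⟩, by omega, by omega⟩
  · right; left
    exact ⟨Or.inr ⟨by nlinarith [sq_nonneg (g - 2)], by omega⟩, by omega, by omega⟩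
  · by_cases hc : d ≥ g + 4
    · right; left
      exact ⟨Or.inr ⟨by nlinarith [sq_nonneg (g - 2)], by omega⟩, by omega, by omega⟩
    · have hdg3 : d = g + 3 := by omega
      by_cases h9' : g = 9
      · right; right
        have hd12 : d = 12 := by omega
        exact ⟨Or.inl ⟨by rw [hd12, h9']; norm_num, by rw [hd12]; norm_num⟩, by omega, by omega⟩
      · right; right
        refine ⟨Or.inr ⟨?_, by omega⟩, by omega, by omega⟩
        have h10 : 10 ≤ g := by omega
        nlinarith
  · right; right
    have key : 16 * g < d ^ 2 := by
      have h1 : (0:ℤ) ≤ (2 * d - (g + 16)) * (2 * d + (g + 16)) :=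
        mul_nonneg (by omega) (by omega)
      nlinarith [sq_nonneg (g - 16)]
    refine ⟨Or.inr ⟨key, by omega⟩, ?_, by omega⟩
    by_cases hd16 : d ≤ 16
    · left; exact hd16
    · right; omega
end
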